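/- For any nonzero algebraic number α and real C ≥ 1, the set of algebraic numbers γ in a fixed number field K with M(γ) ≤ C is finite, where M(γ) = H(γ)^{deg γ}. -/

import Mathlib

open Polynomial

/-- The primitive integer minimal polynomial of an algebraic number. -/
noncomputable def intMinpoly (α : ℂ) : Polynomial ℤ :=
  (IsLocalization.integerNormalization (nonZeroDivisors ℤ) (minpoly ℚ α)).primPart

/-- Mahler measure of an integer polynomial. -/
noncomputable def polyMahler (f : Polynomial ℤ) : ℝ :=
  |(f.leadingCoeff : ℝ)| *
    ((f.map (Int.castRingHom ℂ)).roots.map (fun z => max 1 (‖z‖))).prod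

/-- Mahler measure of an algebraic number. -/
noncomputable def mahlerM (α : ℂ) : ℝ := polyMahler (intMinpoly α)

/-- Absolute multiplicative Weil height. -/
noncomputable def height (α : ℂ) : ℝ :=
  mahlerM α ^ ((1 : ℝ) / (minpoly ℚ α).natDegree)

/-- Any complex root of the rational minimal polynomial is a root of `intMinpoly`. -/
lemma intMinpoly_aeval_eq_zero {γ z : ℂ} (hγ : IsIntegral ℚ γ)
    (hz : Polynomial.aeval z (minpoly ℚ γ) = 0) : Polynomial.aeval z (intMinpoly γ) = 0 := by
  set g := IsLocalization.integerNormalization (nonZeroDivisors ℤ) (minpoly ℚ γ) with hg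
  have hg0 : g ≠ 0 := by
    rw [hg, Ne, IsFractionRing.integerNormalization_eq_zero_iff]
    exact minpoly.ne_zero hγ
  have hgz : Polynomial.aeval z g = 0 :=
    IsLocalization.integerNormalization_aeval_eq_zero (nonZeroDivisors ℤ) (minpoly ℚ γ) hz
  have hdecomp : g = Polynomial.C g.content * g.primPart := g.eq_C_content_mul_primPart
  have h : algebraMap ℤ ℂ g.content * Polynomial.aeval z g.primPart = 0 := by
    rw [← Polynomial.aeval_C (R := ℤ) (A := ℂ), ← map_mul, ← hdecomp]
    exact hgz
  have hc : algebraMap ℤ ℂ g.content ≠ 0 := by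
    simp only [algebraMap_int_eq, eq_intCast, Ne, Int.cast_eq_zero]
    exact Polynomial.content_eq_zero_iff.not.mpr hg0
  exact (mul_eq_zero.mp h).resolve_left hc

lemma intMinpoly_ne_zero (γ : ℂ) : intMinpoly γ ≠ 0 := Polynomial.primPart_ne_zero _

/-- Roots of the minimal polynomial are in the root multiset of the mapped `intMinpoly`. -/
lemma mem_roots_intMinpoly {γ z : ℂ} (hγ : IsIntegral ℚ γ)
    (hz : Polynomial.aeval z (minpoly ℚ γ) = 0) :
    z ∈ ((intMinpoly γ).map (Int.castRingHom ℂ)).roots := by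
  rw [Polynomial.mem_roots']
  refine ⟨(Polynomial.map_ne_zero_iff Int.cast_injective).mpr (intMinpoly_ne_zero γ), ?_⟩
  rw [Polynomial.IsRoot, Polynomial.eval_map, ← algebraMap_int_eq, ← Polynomial.aeval_def]
  exact intMinpoly_aeval_eq_zero hγ hz

lemma multiset_one_le_prod (s : Multiset ℝ) (h : ∀ x ∈ s, 1 ≤ x) : 1 ≤ s.prod := by
  induction s using Multiset.induction_on with
  | empty => simp
  | cons a s ih =>
    rw [Multiset.prod_cons]
    have ha := h a (Multiset.mem_cons_self a s)
    have hs := ih (fun x hx => h x (Multiset.mem_cons_of_mem hx))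
    nlinarith

lemma multiset_single_le_prod (s : Multiset ℝ) (h : ∀ x ∈ s, 1 ≤ x) {x : ℝ} (hx : x ∈ s) :
    x ≤ s.prod := by
  rw [← Multiset.prod_erase hx]
  have h1 := multiset_one_le_prod (s.erase x) (fun y hy => h y (Multiset.mem_of_mem_erase hy))
  nlinarith [h x hx]

lemma one_le_prod_max (f : Polynomial ℤ) :
    1 ≤ ((f.map (Int.castRingHom ℂ)).roots.map (fun z => max 1 (‖z‖))).prod := by
  apply multiset_one_le_prod
  intro x hx
  obtain ⟨z, _, rfl⟩ := Multiset.mem_map.mp hx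
  exact le_max_left _ _

lemma one_le_abs_leadingCoeff {f : Polynomial ℤ} (hf : f ≠ 0) :
    (1 : ℝ) ≤ |(f.leadingCoeff : ℝ)| := by
  have : f.leadingCoeff ≠ 0 := Polynomial.leadingCoeff_ne_zero.mpr hf
  exact_mod_cast Int.one_le_abs this

lemma abs_leadingCoeff_le_polyMahler {f : Polynomial ℤ} :
    |(f.leadingCoeff : ℝ)| ≤ polyMahler f := by
  unfold polyMahler
  nth_rewrite 1 [← mul_one |(f.leadingCoeff : ℝ)|]
  exact mul_le_mul_of_nonneg_left (one_le_prod_max f) (abs_nonneg _)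

lemma root_abs_le_polyMahler {f : Polynomial ℤ} (hf : f ≠ 0) {z : ℂ}
    (hz : z ∈ (f.map (Int.castRingHom ℂ)).roots) : ‖z‖ ≤ polyMahler f := by
  have h1 : ‖z‖ ≤ max 1 (‖z‖) := le_max_right _ _
  have h2 : max 1 (‖z‖)
      ≤ ((f.map (Int.castRingHom ℂ)).roots.map (fun z => max 1 (‖z‖))).prod := by
    apply multiset_single_le_prod
    · intro x hx
      obtain ⟨w, _, rfl⟩ := Multiset.mem_map.mp hx
      exact le_max_left _ _
    · exact Multiset.mem_map_of_mem _ hz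
  calc ‖z‖ ≤ _ := h1
    _ ≤ _ := h2
    _ = 1 * _ := (one_mul _).symm
    _ ≤ |(f.leadingCoeff : ℝ)| * _ := by
        apply mul_le_mul_of_nonneg_right (one_le_abs_leadingCoeff hf)
        exact le_trans zero_le_one (one_le_prod_max f)

theorem northcott (K : IntermediateField ℚ ℂ) [FiniteDimensional ℚ K]
    (α : ℂ) (hα : IsAlgebraic ℚ α) (hαne : α ≠ 0) (C : ℝ) (hC : 1 ≤ C) :
    {γ : ℂ | γ ∈ K ∧ mahlerM γ ≤ C}.Finite := by
  haveI : NumberField K := ⟨⟩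
  set S1 : Set ℤ := Set.Icc (-(⌈C⌉₊ : ℤ)) (⌈C⌉₊ : ℤ) with hS1
  set S2 : Set K := {x : K | IsIntegral ℤ x ∧ ∀ φ : K →+* ℂ, ‖φ x‖ ≤ C * C} with hS2
  have hS1fin : S1.Finite := Set.finite_Icc _ _
  have hS2fin : S2.Finite := NumberField.Embeddings.finite_of_norm_le K ℂ (C * C)
  have hTfin : (S1 ×ˢ ((↑) '' S2 : Set ℂ)).Finite := hS1fin.prod (hS2fin.image _)
  apply Set.Finite.of_finite_image (f := fun γ : ℂ =>
    ((intMinpoly γ).leadingCoeff, ((intMinpoly γ).leadingCoeff : ℂ) * γ))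
  · apply hTfin.subset
    rintro _ ⟨γ, ⟨hγK, hγC⟩, rfl⟩
    -- basic facts about γ
    have hint : IsIntegral ℚ (⟨γ, hγK⟩ : K) := IsIntegral.of_finite ℚ _
    have hγalg : IsIntegral ℚ γ := by
      have := hint.algebraMap (B := ℂ)
      simpa using this
    have hmineq : minpoly ℚ γ = minpoly ℚ (⟨γ, hγK⟩ : K) :=
      minpoly.algebraMap_eq (algebraMap K ℂ).injective (⟨γ, hγK⟩ : K)
    set f := intMinpoly γ with hf
    have hf0 : f ≠ 0 := intMinpoly_ne_zero γ
    set a := f.leadingCoeff with ha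
    have ha0 : a ≠ 0 := Polynomial.leadingCoeff_ne_zero.mpr hf0
    have hmahler : polyMahler f ≤ C := hγC
    have haC : |(a : ℝ)| ≤ C := le_trans abs_leadingCoeff_le_polyMahler hmahler
    constructor
    · -- leading coefficient is bounded
      rw [hS1, Set.mem_Icc, ← abs_le]
      have : (|a| : ℝ) ≤ (⌈C⌉₊ : ℝ) := by
        push_cast
        exact le_trans haC (Nat.le_ceil C)
      exact_mod_cast this
    · -- a • γ is an algebraic integer with small conjugates
      refine ⟨(algebraMap ℤ K a) * ⟨γ, hγK⟩, ⟨?_, ?_⟩, ?_⟩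
      · -- integrality
        have hroot : Polynomial.aeval (⟨γ, hγK⟩ : K) f = 0 := by
          have hγroot : Polynomial.aeval γ f = 0 :=
            intMinpoly_aeval_eq_zero hγalg (minpoly.aeval ℚ γ)
          have : Polynomial.aeval (algebraMap K ℂ (⟨γ, hγK⟩ : K)) f = 0 := hγroot
          rw [Polynomial.aeval_algebraMap_eq_zero_iff_of_injective
            (algebraMap K ℂ).injective] at this
          exact this
        refine ⟨f.integralNormalization, f.monic_integralNormalization hf0, ?_⟩
        rw [← Polynomial.aeval_def]
        exact Polynomial.integralNormalization_aeval_eq_zero hroot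
          (fun x hx => by
            rw [algebraMap_int_eq, eq_intCast] at hx
            exact_mod_cast hx)
      · -- conjugate bounds
        intro φ
        rw [map_mul]
        have hφγ : ‖φ (⟨γ, hγK⟩ : K)‖ ≤ C := by
          have hzroot : Polynomial.aeval (φ (⟨γ, hγK⟩ : K)) (minpoly ℚ γ) = 0 := by
            rw [hmineq]
            have := Polynomial.aeval_algHom_apply φ.toRatAlgHom (⟨γ, hγK⟩ : K)
              (minpoly ℚ (⟨γ, hγK⟩ : K))
            rw [minpoly.aeval, map_zero] at this
            exact this
          exact le_trans (root_abs_le_polyMahler hf0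
            (mem_roots_intMinpoly hγalg hzroot)) hmahler
        have hφa : ‖φ (algebraMap ℤ K a)‖ ≤ C := by
          have heq : φ (algebraMap ℤ K a) = (a : ℂ) := by
            rw [algebraMap_int_eq, eq_intCast, map_intCast]
          rw [heq]
          simpa using haC
        calc ‖φ (algebraMap ℤ K a) * φ (⟨γ, hγK⟩ : K)‖
            = ‖φ (algebraMap ℤ K a)‖ * ‖φ (⟨γ, hγK⟩ : K)‖ := by
              simp
          _ ≤ C * C := by
              apply mul_le_mul hφa hφγ (norm_nonneg _)
              linarith
      · -- the image equation
        push_cast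
        simp [mul_comm]
        exact Or.inl rfl
  · -- injectivity
    rintro γ₁ ⟨hγ₁K, _⟩ γ₂ ⟨hγ₂K, _⟩ h
    simp only [Prod.mk.injEq] at h
    obtain ⟨h1, h2⟩ := h
    have ha0 : ((intMinpoly γ₁).leadingCoeff : ℂ) ≠ 0 := by
      exact_mod_cast Polynomial.leadingCoeff_ne_zero.mpr (intMinpoly_ne_zero γ₁)
    rw [h1] at h2 ha0
    exact mul_left_cancel₀ ha0 h2
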